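/- For vectors $\eta, \zeta \in \mathbb{R}^3 \setminus \{0\}$ and $\xi = \eta + \zeta$, the cross-product null form symbol satisfies the hyperbolic bound $\left|\frac{\eta \times \zeta}{|\eta||\zeta|}\right| \lesssim \frac{|\xi|^{1/2} (|\xi| - ||\eta| - |\zeta||)^{1/2}}{|\eta|^{1/2} |\zeta|^{1/2}}$, with an absolute implicit constant. -/

import Mathlib

noncomputable section

abbrev E3 := EuclideanSpace ℝ (Fin 3)

/-- The cross product in `ℝ³` (with the Euclidean norm). -/
def cross3 (a b : E3) : E3 :=
  (WithLp.equiv 2 (Fin 3 → ℝ)).symm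
    ![a 1 * b 2 - a 2 * b 1, a 2 * b 0 - a 0 * b 2, a 0 * b 1 - a 1 * b 0]

lemma cross_norm_sq (η ζ : E3) :
    ‖cross3 η ζ‖^2 = ‖η‖^2*‖ζ‖^2 - (inner ℝ η ζ : ℝ)^2 := by
  simp only [← real_inner_self_eq_norm_sq]
  simp only [PiLp.inner_apply, RCLike.inner_apply, conj_trivial, Fin.sum_univ_three, cross3,
    WithLp.equiv_symm_apply, PiLp.toLp_apply, Matrix.cons_val_zero, Matrix.cons_val_one, Matrix.head_cons, Matrix.cons_val_two, Matrix.tail_cons, RCLike.re_to_real]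
  ring

theorem crossproduct_nullform_hyperbolic_bound :
    ∃ C : ℝ, 0 < C ∧ ∀ η ζ : E3, η ≠ 0 → ζ ≠ 0 →
      ‖cross3 η ζ‖ / (‖η‖ * ‖ζ‖) ≤
        C * (Real.sqrt ‖η + ζ‖ * Real.sqrt (‖η + ζ‖ - |‖η‖ - ‖ζ‖|)) /
          (Real.sqrt ‖η‖ * Real.sqrt ‖ζ‖) := by
  refine ⟨2, by norm_num, fun η ζ hη hζ => ?_⟩
  set x := ‖η‖ with hx
  set y := ‖ζ‖ with hy
  set T := ‖η + ζ‖ with hT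
  set a := |x - y| with ha
  have hx0 : 0 < x := norm_pos_iff.mpr hη
  have hy0 : 0 < y := norm_pos_iff.mpr hζ
  have hT0 : 0 ≤ T := norm_nonneg _
  have haT : a ≤ T := by
    have := abs_norm_sub_norm_le η (-ζ)
    simpa [sub_neg_eq_add] using this
  have ha0 : 0 ≤ a := abs_nonneg _
  set p : ℝ := inner ℝ η ζ with hp
  have hcs : |p| ≤ x * y := abs_real_inner_le_norm η ζ
  have hTsq : T^2 = x^2 + y^2 + 2*p := by
    rw [hT, hx, hy, hp, norm_add_sq_real]; ring
  have hasq : a^2 = (x - y)^2 := sq_abs _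
  have key : ‖cross3 η ζ‖^2 ≤ 2 * x * y * T * (T - a) := by
    rw [cross_norm_sq η ζ, ← hx, ← hy, ← hp]
    have h1 : |p| ≤ x*y := hcs
    nlinarith [abs_le.mp hcs, sq_nonneg (T - a), sq_nonneg (T + a), mul_pos hx0 hy0,
      mul_nonneg (mul_nonneg hx0.le hy0.le) (sub_nonneg.mpr haT)]
  have hTa0 : 0 ≤ T - a := sub_nonneg.mpr haT
  have hc0 : (0:ℝ) ≤ ‖cross3 η ζ‖ := norm_nonneg _
  have hle : ‖cross3 η ζ‖ ≤ Real.sqrt 2 * Real.sqrt x * Real.sqrt y * Real.sqrt T * Real.sqrt (T - a) := by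
    have := Real.sqrt_le_sqrt key
    rw [Real.sqrt_sq hc0] at this
    calc ‖cross3 η ζ‖ ≤ Real.sqrt (2 * x * y * T * (T - a)) := this
      _ = Real.sqrt 2 * Real.sqrt x * Real.sqrt y * Real.sqrt T * Real.sqrt (T - a) := by
          rw [Real.sqrt_mul (by positivity), Real.sqrt_mul (by positivity),
            Real.sqrt_mul (by positivity), Real.sqrt_mul (by norm_num)]
  rw [div_le_div_iff₀ (by positivity) (by positivity)]
  have hxx : Real.sqrt x * Real.sqrt x = x := Real.mul_self_sqrt hx0.le
  have hyy : Real.sqrt y * Real.sqrt y = y := Real.mul_self_sqrt hy0.le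
  have h2 : Real.sqrt 2 ≤ 2 := by
    nlinarith [Real.sq_sqrt (show (0:ℝ) ≤ 2 by norm_num), Real.sqrt_nonneg 2]
  calc ‖cross3 η ζ‖ * (Real.sqrt x * Real.sqrt y)
      ≤ (Real.sqrt 2 * Real.sqrt x * Real.sqrt y * Real.sqrt T * Real.sqrt (T - a)) *
          (Real.sqrt x * Real.sqrt y) := by
        apply mul_le_mul_of_nonneg_right hle (by positivity)
    _ = Real.sqrt 2 * (Real.sqrt T * Real.sqrt (T - a)) *
          ((Real.sqrt x * Real.sqrt x) * (Real.sqrt y * Real.sqrt y)) := by ring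
    _ = Real.sqrt 2 * (Real.sqrt T * Real.sqrt (T - a)) * (x * y) := by rw [hxx, hyy]
    _ ≤ 2 * (Real.sqrt T * Real.sqrt (T - a)) * (x * y) := by
        apply mul_le_mul_of_nonneg_right (mul_le_mul_of_nonneg_right h2 (by positivity))
          (by positivity)
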